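/- Let τ = {x₁,…,x_n} ⊂ ℝ^d be a finite set of points, q ∈ ℕ, and let β ∈ ℝ^n with ‖β‖₂ ≤ 1 be such that the signed measure σ = Σ_{i=1}^n β_i δ_{x_i} has vanishing moments of order q+1, i.e., Σ_{i=1}^n β_i p(x_i) = 0 for every polynomial p on ℝ^d of total degree at most q. Then for every open convex set O ⊂ ℝ^d containing τ and every f ∈ C^{q+1}(O), there holds |Σ_{i=1}^n β_i f(x_i)| ≤ √n · (d/2)^{q+1} · diam(τ)^{q+1} / (q+1)! · ‖f‖_{C^{q+1}(O)}, where diam(τ) = max_{x,y ∈ τ} ‖x − y‖_∞ and ‖f‖_{C^{q+1}(O)} = max_{|α| ≤ q+1} sup_{x ∈ O} |∂^α f(x)| over multi-indices α. -/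

import Mathlib

open scoped BigOperators RealInnerProductSpace

lemma samplet_aux_line {d q : ℕ} {O : Set (EuclideanSpace ℝ (Fin d))}
    (hO : IsOpen O) {f : EuclideanSpace ℝ (Fin d) → ℝ}
    (hf : ContDiffOn ℝ (q + 1) f O)
    {y v : EuclideanSpace ℝ (Fin d)}
    (hmaps : Set.MapsTo (fun t : ℝ => y + t • v) (Set.Icc 0 1) O) :
    ∀ m : ℕ, m ≤ q + 1 → ∀ t ∈ Set.Icc (0:ℝ) 1,
      iteratedDerivWithin m (fun t : ℝ => f (y + t • v)) (Set.Icc 0 1) t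
        = iteratedFDerivWithin ℝ m f O (y + t • v) (fun _ => v) := by
  intro m
  induction m with
  | zero =>
    intro _ t ht
    simp [iteratedFDerivWithin_zero_apply]
  | succ m ih =>
    intro hm t ht
    have hm' : m ≤ q + 1 := Nat.le_of_succ_le hm
    have hunique : UniqueDiffOn ℝ (Set.Icc (0:ℝ) 1) := uniqueDiffOn_Icc zero_lt_one
    rw [iteratedDerivWithin_succ]
    rw [derivWithin_congr (fun s hs => ih hm' s hs) (ih hm' t ht)]
    refine HasDerivWithinAt.derivWithin ?_ (hunique t ht)
    have hmlt : (m : WithTop ℕ∞) < (q + 1 : ℕ) := by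
      exact_mod_cast Nat.lt_succ_of_le (Nat.lt_succ_iff.mp hm)
    have hdiff : HasFDerivWithinAt (iteratedFDerivWithin ℝ m f O)
        (fderivWithin ℝ (iteratedFDerivWithin ℝ m f O) O (y + t • v)) O (y + t • v) :=
      ((hf.differentiableOn_iteratedFDerivWithin hmlt hO.uniqueDiffOn) _
        (hmaps ht)).hasFDerivWithinAt
    have hγ : HasDerivWithinAt (fun t : ℝ => y + t • v) v (Set.Icc 0 1) t := by
      have h1 : HasDerivAt (fun t : ℝ => y + t • v) ((1:ℝ) • v) t :=
        ((hasDerivAt_id t).smul_const v).const_add y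
      simpa using h1.hasDerivWithinAt
    set L : ContinuousMultilinearMap ℝ (fun _ : Fin m => EuclideanSpace ℝ (Fin d)) ℝ →L[ℝ] ℝ :=
      ContinuousMultilinearMap.apply ℝ (fun _ : Fin m => EuclideanSpace ℝ (Fin d)) ℝ (fun _ => v)
      with hL
    have hcomp := (L.hasFDerivAt.comp_hasFDerivWithinAt _ hdiff).comp_hasDerivWithinAt t hγ hmaps
    have heq : (L.comp (fderivWithin ℝ (iteratedFDerivWithin ℝ m f O) O (y + t • v))) v
        = iteratedFDerivWithin ℝ (m + 1) f O (y + t • v) (fun _ => v) := by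
      rw [iteratedFDerivWithin_succ_apply_left]
      simp only [hL, ContinuousLinearMap.comp_apply, ContinuousMultilinearMap.apply_apply]
      rfl
    rw [← heq]
    simpa only [hL, Function.comp_def, ContinuousMultilinearMap.apply_apply] using hcomp

lemma samplet_aux_expand {d m : ℕ}
    (W : ContinuousMultilinearMap ℝ (fun _ : Fin m => EuclideanSpace ℝ (Fin d)) ℝ)
    (v : EuclideanSpace ℝ (Fin d)) :
    W (fun _ => v) = ∑ r : Fin m → Fin d,
      (∏ j, v (r j)) * W (fun j => EuclideanSpace.single (r j) (1:ℝ)) := by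
  have hv : v = ∑ k, v k • EuclideanSpace.single k (1:ℝ) := by
    have h := (EuclideanSpace.basisFun (Fin d) ℝ).sum_repr v
    simp only [EuclideanSpace.basisFun_apply, EuclideanSpace.basisFun_repr] at h
    exact h.symm
  calc W (fun _ => v) = W (fun _ => ∑ k, v k • EuclideanSpace.single k (1:ℝ)) := by rw [← hv]
    _ = ∑ r : Fin m → Fin d, W (fun j => v (r j) • EuclideanSpace.single (r j) (1:ℝ)) :=
        W.toMultilinearMap.map_sum (fun _ k => v k • EuclideanSpace.single k (1:ℝ))
    _ = ∑ r : Fin m → Fin d,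
        (∏ j, v (r j)) * W (fun j => EuclideanSpace.single (r j) (1:ℝ)) := by
        refine Finset.sum_congr rfl fun r _ => ?_
        rw [show W (fun j => v (r j) • EuclideanSpace.single (r j) (1:ℝ))
            = W.toMultilinearMap (fun j => v (r j) • EuclideanSpace.single (r j) (1:ℝ)) from rfl,
          MultilinearMap.map_smul_univ]
        simp [smul_eq_mul]


/-- **Vanishing moment estimate for samplets.**  Let `τ = {x₁,…,x_n} ⊂ ℝ^d`, `q ∈ ℕ`,
and let `β ∈ ℝ^n` with `‖β‖₂ ≤ 1` be such that the signed measure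
`σ = Σ_i β_i δ_{x_i}` has vanishing moments of order `q+1`, i.e. `Σ_i β_i p(x_i) = 0`
for every polynomial `p` of total degree at most `q`.  Then for every open convex set
`O` containing `τ` and every `f ∈ C^{q+1}(O)` (with all derivatives of order at most
`q+1` bounded by `M` on `O`, `M` playing the role of `‖f‖_{C^{q+1}(O)}`),
`|Σ_i β_i f(x_i)| ≤ √n (d/2)^{q+1} diam(τ)^{q+1} / (q+1)! · M`,
where `diam(τ) = max_{i,j} ‖x_i - x_j‖_∞`. -/
theorem samplet_vanishing_moment_estimate
    {d n : ℕ} (hd : 0 < d) (hn : 0 < n) (q : ℕ)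
    (x : Fin n → EuclideanSpace ℝ (Fin d))
    (β : Fin n → ℝ) (hβ : ∑ i, β i ^ 2 ≤ 1)
    (hvanish : ∀ p : MvPolynomial (Fin d) ℝ, p.totalDegree ≤ q →
      ∑ i, β i * MvPolynomial.eval (fun k => x i k) p = 0)
    (O : Set (EuclideanSpace ℝ (Fin d))) (hO : IsOpen O) (hOconv : Convex ℝ O)
    (hxO : ∀ i, x i ∈ O)
    (f : EuclideanSpace ℝ (Fin d) → ℝ)
    (hf : ContDiffOn ℝ (q + 1) f O)
    -- `diam` is the `ℓ^∞`-diameter of `τ = {x₁,…,x_n}`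
    (diam : ℝ)
    (hdiam_ub : ∀ i j : Fin n, ∀ k : Fin d, |x i k - x j k| ≤ diam)
    (hdiam_mem : ∃ i j : Fin n, ∃ k : Fin d, |x i k - x j k| = diam)
    -- `M` bounds all derivatives of `f` up to order `q+1` on `O`
    (M : ℝ)
    (hM : ∀ m : ℕ, m ≤ q + 1 → ∀ y ∈ O, ‖iteratedFDerivWithin ℝ m f O y‖ ≤ M) :
    |∑ i, β i * f (x i)| ≤
      Real.sqrt n * ((d : ℝ) / 2) ^ (q + 1) * diam ^ (q + 1) /
        (Nat.factorial (q + 1)) * M := by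
  haveI : Nonempty (Fin n) := ⟨⟨0, hn⟩⟩
  have hdiam0 : 0 ≤ diam := by
    obtain ⟨i, j, k, hk⟩ := hdiam_mem
    rw [← hk]; positivity
  -- the convex hull of the points
  set K : Set (EuclideanSpace ℝ (Fin d)) := convexHull ℝ (Set.range x) with hK
  have hKO : K ⊆ O := convexHull_min (by rintro _ ⟨i, rfl⟩; exact hxO i) hOconv
  have hKne : K.Nonempty := ⟨x ⟨0, hn⟩, subset_convexHull ℝ _ ⟨⟨0, hn⟩, rfl⟩⟩
  have hKcomplete : IsComplete K :=
    ((Set.finite_range x).isCompact_convexHull (𝕜 := ℝ)).isClosed.isComplete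
  -- the ℓ^∞ bounding-box midpoint
  set lo : Fin d → ℝ := fun k => Finset.univ.inf' Finset.univ_nonempty (fun i => x i k) with hlo
  set hi : Fin d → ℝ := fun k => Finset.univ.sup' Finset.univ_nonempty (fun i => x i k) with hhi
  set mid : EuclideanSpace ℝ (Fin d) :=
    (WithLp.equiv 2 (Fin d → ℝ)).symm (fun k => (lo k + hi k) / 2) with hmid
  have hmid_apply : ∀ k, mid k = (lo k + hi k) / 2 := fun k => rfl
  have hmid_close : ∀ i k, |x i k - mid k| ≤ diam / 2 := by
    intro i k
    have h1 : lo k ≤ x i k := by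
      rw [hlo]; exact Finset.inf'_le (fun i => x i k) (Finset.mem_univ i)
    have h2 : x i k ≤ hi k := by
      rw [hhi]; exact Finset.le_sup' (fun i => x i k) (Finset.mem_univ i)
    obtain ⟨a, -, ha⟩ := Finset.exists_mem_eq_sup' Finset.univ_nonempty (fun i => x i k)
    obtain ⟨b, -, hb⟩ := Finset.exists_mem_eq_inf' Finset.univ_nonempty (fun i => x i k)
    have h3 : hi k - lo k ≤ diam := by
      rw [hhi, hlo]
      simp only
      rw [ha, hb]
      exact (le_abs_self _).trans (hdiam_ub a b k)
    rw [hmid_apply]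
    rw [abs_le]
    constructor <;> [linarith; linarith]
  -- nearest point projection of mid onto K
  obtain ⟨y, hyK, hymin⟩ :=
    exists_norm_eq_iInf_of_complete_convex hKne hKcomplete (convex_convexHull ℝ _) mid
  have hproj := (norm_eq_iInf_iff_real_inner_le_zero (convex_convexHull ℝ _) hyK).mp hymin
  have hyO : y ∈ O := hKO hyK
  have hM0 : 0 ≤ M := (norm_nonneg _).trans (hM 0 (Nat.zero_le _) y hyO)
  -- distance bound
  set D : ℝ := (d : ℝ) * diam / 2 with hD
  have hD0 : 0 ≤ D := by positivity
  have hclose : ∀ i, ‖x i - y‖ ≤ D := by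
    intro i
    have hzK : x i ∈ K := subset_convexHull ℝ _ ⟨i, rfl⟩
    have hip : (inner ℝ (x i - y) (mid - y) : ℝ) ≤ 0 := by
      rw [real_inner_comm]; exact hproj (x i) hzK
    have hexp : ‖x i - mid‖ ^ 2
        = ‖x i - y‖ ^ 2 - 2 * (inner ℝ (x i - y) (mid - y) : ℝ) + ‖mid - y‖ ^ 2 := by
      rw [show x i - mid = (x i - y) - (mid - y) by abel, norm_sub_sq_real]
    have h2 : ‖x i - y‖ ^ 2 ≤ ‖x i - mid‖ ^ 2 := by nlinarith [sq_nonneg ‖mid - y‖]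
    have hstep1 : ‖x i - y‖ ≤ ‖x i - mid‖ := by
      calc ‖x i - y‖ = Real.sqrt (‖x i - y‖ ^ 2) := (Real.sqrt_sq (norm_nonneg _)).symm
        _ ≤ Real.sqrt (‖x i - mid‖ ^ 2) := Real.sqrt_le_sqrt h2
        _ = ‖x i - mid‖ := Real.sqrt_sq (norm_nonneg _)
    have hstep2 : ‖x i - mid‖ ≤ Real.sqrt d * (diam / 2) := by
      rw [EuclideanSpace.norm_eq]
      have hsum : ∑ k, ‖(x i - mid) k‖ ^ 2 ≤ (d : ℝ) * (diam / 2) ^ 2 := by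
        calc ∑ k, ‖(x i - mid) k‖ ^ 2 ≤ ∑ _k : Fin d, (diam / 2) ^ 2 := by
              refine Finset.sum_le_sum fun k _ => ?_
              have : ‖(x i - mid) k‖ = |x i k - mid k| := by
                rw [PiLp.sub_apply, Real.norm_eq_abs]
              rw [this]
              exact pow_le_pow_left₀ (abs_nonneg _) (hmid_close i k) 2
          _ = (d : ℝ) * (diam / 2) ^ 2 := by
              simp [Finset.sum_const, Finset.card_univ, nsmul_eq_mul]
      calc Real.sqrt (∑ k, ‖(x i - mid) k‖ ^ 2) ≤ Real.sqrt ((d : ℝ) * (diam / 2) ^ 2) :=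
            Real.sqrt_le_sqrt hsum
        _ = Real.sqrt d * (diam / 2) := by
            rw [Real.sqrt_mul (by positivity), Real.sqrt_sq (by positivity)]
    have hsd : Real.sqrt d ≤ (d : ℝ) := by
      have h1d : (1 : ℝ) ≤ d := by exact_mod_cast hd
      calc Real.sqrt d ≤ Real.sqrt ((d : ℝ) ^ 2) := Real.sqrt_le_sqrt (by nlinarith)
        _ = (d : ℝ) := Real.sqrt_sq (by positivity)
    calc ‖x i - y‖ ≤ Real.sqrt d * (diam / 2) := hstep1.trans hstep2
      _ ≤ (d : ℝ) * (diam / 2) := mul_le_mul_of_nonneg_right hsd (by positivity)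
      _ = D := by rw [hD]; ring
  -- the Taylor polynomial values
  set T : Fin n → ℝ := fun i => ∑ m ∈ Finset.range (q + 1),
    (1 / (Nat.factorial m : ℝ)) * iteratedFDerivWithin ℝ m f O y (fun _ => x i - y) with hT
  -- Taylor remainder estimate
  have hrem : ∀ i, |f (x i) - T i| ≤ M * D ^ (q + 1) / (Nat.factorial (q + 1) : ℝ) := by
    intro i
    set v : EuclideanSpace ℝ (Fin d) := x i - y with hv
    have hmaps : Set.MapsTo (fun t : ℝ => y + t • v) (Set.Icc 0 1) O := by
      intro t ht
      exact hOconv.add_smul_sub_mem hyO (hxO i) ht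
    have key := samplet_aux_line hO hf hmaps
    set g : ℝ → ℝ := fun t => f (y + t • v) with hg
    have hγ : ContDiffOn ℝ (q + 1 : ℕ) (fun t : ℝ => y + t • v) (Set.Icc 0 1) :=
      (contDiff_const.add (contDiff_id.smul contDiff_const)).contDiffOn
    have hgC : ContDiffOn ℝ (q + 1 : ℕ) g (Set.Icc 0 1) := hf.comp hγ hmaps
    have hunique : UniqueDiffOn ℝ (Set.Icc (0:ℝ) 1) := uniqueDiffOn_Icc zero_lt_one
    have hIcc : Set.uIcc (0:ℝ) 1 = Set.Icc 0 1 := Set.uIcc_of_le zero_le_one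
    have hIoo : Set.uIoo (0:ℝ) 1 = Set.Ioo 0 1 := Set.uIoo_of_le zero_le_one
    obtain ⟨x', hx', hid⟩ := taylor_mean_remainder_lagrange (f := g) (n := q) (x₀ := 0) (x := 1)
      zero_ne_one
      (by rw [hIcc]; exact (hgC.of_le (by exact_mod_cast Nat.le_succ q)))
      (by rw [hIcc, hIoo]; exact ((hgC.differentiableOn_iteratedDerivWithin (by exact_mod_cast Nat.lt_succ_self q)
        hunique).mono Set.Ioo_subset_Icc_self))
    rw [hIcc] at hid
    rw [hIoo] at hx'
    have hg1 : g 1 = f (x i) := by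
      rw [hg]; simp [hv]
    have hTay : taylorWithinEval g q (Set.Icc 0 1) 0 1 = T i := by
      rw [taylor_within_apply, hT]
      refine Finset.sum_congr rfl fun m hm => ?_
      have hm' : m ≤ q + 1 := (Nat.lt_succ_iff.mp (Finset.mem_range.mp hm)).trans (Nat.le_succ q)
      rw [key m hm' 0 (by norm_num)]
      simp [smul_eq_mul, hv]
    have hx'I : x' ∈ Set.Icc (0:ℝ) 1 := Set.Ioo_subset_Icc_self hx'
    have hder : iteratedDerivWithin (q + 1) g (Set.Icc 0 1) x'
        = iteratedFDerivWithin ℝ (q + 1) f O (y + x' • v) (fun _ => v) :=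
      key (q + 1) le_rfl x' hx'I
    have hbound : |iteratedDerivWithin (q + 1) g (Set.Icc 0 1) x'| ≤ M * D ^ (q + 1) := by
      rw [hder]
      have h1 : ‖iteratedFDerivWithin ℝ (q + 1) f O (y + x' • v) (fun _ => v)‖
          ≤ ‖iteratedFDerivWithin ℝ (q + 1) f O (y + x' • v)‖ * ∏ _j : Fin (q + 1), ‖v‖ :=
        (iteratedFDerivWithin ℝ (q + 1) f O (y + x' • v)).le_opNorm _
      have h2 : (∏ _j : Fin (q + 1), ‖v‖) = ‖v‖ ^ (q + 1) := by
        simp [Finset.prod_const, Finset.card_univ]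
      have h3 : ‖iteratedFDerivWithin ℝ (q + 1) f O (y + x' • v)‖ ≤ M :=
        hM (q + 1) le_rfl _ (hmaps hx'I)
      have h4 : ‖v‖ ^ (q + 1) ≤ D ^ (q + 1) :=
        pow_le_pow_left₀ (norm_nonneg _) (hclose i) _
      calc |iteratedFDerivWithin ℝ (q + 1) f O (y + x' • v) (fun _ => v)|
          = ‖iteratedFDerivWithin ℝ (q + 1) f O (y + x' • v) (fun _ => v)‖ :=
            (Real.norm_eq_abs _).symm
        _ ≤ ‖iteratedFDerivWithin ℝ (q + 1) f O (y + x' • v)‖ * ‖v‖ ^ (q + 1) := by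
            rw [← h2]; exact h1
        _ ≤ M * D ^ (q + 1) :=
            mul_le_mul h3 h4 (by positivity) hM0
    rw [← hg1, ← hTay]
    rw [hid]
    rw [sub_zero, one_pow, mul_one, abs_div, Nat.abs_cast]
    exact div_le_div₀ (by positivity) hbound (by positivity) le_rfl
  -- the polynomial with vanishing moments
  set p : MvPolynomial (Fin d) ℝ := ∑ m ∈ Finset.range (q + 1), ∑ r : Fin m → Fin d,
      MvPolynomial.C ((1 / (Nat.factorial m : ℝ)) *
        iteratedFDerivWithin ℝ m f O y (fun j => EuclideanSpace.single (r j) (1:ℝ))) *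
      ∏ j : Fin m, (MvPolynomial.X (r j) - MvPolynomial.C (y (r j))) with hp
  have hdeg : p.totalDegree ≤ q := by
    rw [hp]
    refine (MvPolynomial.totalDegree_finset_sum _ _).trans (Finset.sup_le fun m hm => ?_)
    refine (MvPolynomial.totalDegree_finset_sum _ _).trans (Finset.sup_le fun r _ => ?_)
    refine (MvPolynomial.totalDegree_mul _ _).trans ?_
    rw [MvPolynomial.totalDegree_C, zero_add]
    refine (MvPolynomial.totalDegree_finset_prod _ _).trans ?_
    have hfac : ∀ j : Fin m,
        (MvPolynomial.X (r j) - MvPolynomial.C (y (r j)) : MvPolynomial (Fin d) ℝ).totalDegree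
          ≤ 1 := by
      intro j
      rw [sub_eq_add_neg, ← map_neg]
      refine (MvPolynomial.totalDegree_add _ _).trans ?_
      simp [MvPolynomial.totalDegree_X, MvPolynomial.totalDegree_C]
    calc (∑ j : Fin m,
          (MvPolynomial.X (r j) - MvPolynomial.C (y (r j)) : MvPolynomial (Fin d) ℝ).totalDegree)
        ≤ ∑ _j : Fin m, 1 := Finset.sum_le_sum fun j _ => hfac j
      _ = m := by simp
      _ ≤ q := Nat.lt_succ_iff.mp (Finset.mem_range.mp hm)
  have heval : ∀ i, MvPolynomial.eval (fun k => x i k) p = T i := by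
    intro i
    rw [hp, hT]
    simp only [map_sum, map_mul, map_prod, map_sub, MvPolynomial.eval_C, MvPolynomial.eval_X]
    refine Finset.sum_congr rfl fun m hm => ?_
    rw [samplet_aux_expand (iteratedFDerivWithin ℝ m f O y) (x i - y), Finset.mul_sum]
    refine Finset.sum_congr rfl fun r _ => ?_
    have happ : ∀ j : Fin m, (x i - y) (r j) = x i (r j) - y (r j) := fun j => rfl
    rw [Finset.prod_congr rfl fun j (_ : j ∈ Finset.univ) => happ j]
    ring
  have hzero : ∑ i, β i * T i = 0 := by
    rw [← hvanish p hdeg]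
    exact Finset.sum_congr rfl fun i _ => by rw [heval i]
  -- Cauchy-Schwarz
  have hsum : ∑ i, |β i| ≤ Real.sqrt n := by
    have h1 : (∑ i, |β i|) ^ 2 ≤ (n : ℝ) * ∑ i, |β i| ^ 2 := by
      have := sq_sum_le_card_mul_sum_sq (s := (Finset.univ : Finset (Fin n)))
        (f := fun i => |β i|)
      simpa using this
    have h2 : (∑ i, |β i|) ^ 2 ≤ (n : ℝ) := by
      have h3 : ∑ i, |β i| ^ 2 ≤ 1 := by
        simpa [sq_abs] using hβ
      nlinarith [Nat.cast_nonneg (α := ℝ) n]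
    have := Real.sqrt_le_sqrt h2
    rwa [Real.sqrt_sq (by positivity)] at this
  -- final estimate
  have hDpow : D ^ (q + 1) = ((d : ℝ) / 2) ^ (q + 1) * diam ^ (q + 1) := by
    rw [show D = ((d : ℝ) / 2) * diam by rw [hD]; ring, mul_pow]
  calc |∑ i, β i * f (x i)|
      = |∑ i, β i * (f (x i) - T i)| := by
        rw [show ∑ i, β i * (f (x i) - T i) = ∑ i, β i * f (x i) - ∑ i, β i * T i by
          rw [← Finset.sum_sub_distrib]
          exact Finset.sum_congr rfl fun i _ => mul_sub _ _ _, hzero, sub_zero]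
    _ ≤ ∑ i, |β i * (f (x i) - T i)| := Finset.abs_sum_le_sum_abs _ _
    _ = ∑ i, |β i| * |f (x i) - T i| := by simp [abs_mul]
    _ ≤ ∑ i, |β i| * (M * D ^ (q + 1) / (Nat.factorial (q + 1) : ℝ)) :=
        Finset.sum_le_sum fun i _ => mul_le_mul_of_nonneg_left (hrem i) (abs_nonneg _)
    _ = (∑ i, |β i|) * (M * D ^ (q + 1) / (Nat.factorial (q + 1) : ℝ)) := by rw [← Finset.sum_mul]
    _ ≤ Real.sqrt n * (M * D ^ (q + 1) / (Nat.factorial (q + 1) : ℝ)) := by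
        refine mul_le_mul_of_nonneg_right hsum ?_
        have : (0:ℝ) < (Nat.factorial (q + 1) : ℝ) := by positivity
        exact div_nonneg (mul_nonneg hM0 (pow_nonneg hD0 _)) this.le
    _ = Real.sqrt n * ((d : ℝ) / 2) ^ (q + 1) * diam ^ (q + 1) /
        (Nat.factorial (q + 1)) * M := by
        rw [hDpow]; ring
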